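/- Let R be a local Gaussian ring and I = (a₁, ..., aₙ) a finitely generated ideal of R. Then I² = (aᵢ²) for some i ∈ {1, ..., n}. -/

import Mathlib

universe u v

/-- A chained (valuation) ring: the ideals are totally ordered by inclusion. -/
def IsChainedRing (R : Type*) [CommRing R] : Prop :=
  ∀ I J : Ideal R, I ≤ J ∨ J ≤ I

/-- `R` has zero divisors. -/
def HasZeroDivisors (R : Type*) [CommRing R] : Prop :=
  ∃ a b : R, a ≠ 0 ∧ b ≠ 0 ∧ a * b = 0

/-- An arithmetical ring: the localization at every maximal ideal is a chained ring. -/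
def IsArithmetical (R : Type*) [CommRing R] : Prop :=
  ∀ (P : Ideal R) (hP : P.IsMaximal),
    letI := hP.isPrime
    ∀ I J : Ideal (Localization.AtPrime P), I ≤ J ∨ J ≤ I

/-- `FlatDimLE R n M` : the flat (weak) dimension of `M` is at most `n`. -/
def FlatDimLE (R : Type u) [CommRing R] : ℕ → ModuleCat.{u} R → Prop
  | 0, M => Module.Flat R M
  | (n+1), M => ∃ (F : ModuleCat.{u} R) (f : F →ₗ[R] M), Function.Surjective f ∧
      Module.Flat R F ∧ FlatDimLE R n (ModuleCat.of R (LinearMap.ker f))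

/-- The flat (weak) dimension of a module, valued in `ℕ∞` (`⊤` if no finite flat resolution). -/
noncomputable def flatDim (R : Type u) [CommRing R] (M : ModuleCat.{u} R) : ℕ∞ :=
  sInf {n : ℕ∞ | ∃ k : ℕ, n = (k : ℕ∞) ∧ FlatDimLE R k M}

/-- The weak global dimension of `R` is at most `n`. -/
def WgdimLE (R : Type u) [CommRing R] (n : ℕ) : Prop :=
  ∀ M : ModuleCat.{u} R, FlatDimLE R n M

/-- The weak global dimension of `R` is infinite. -/
def HasInfiniteWeakGlobalDimension (R : Type u) [CommRing R] : Prop :=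
  ∀ n : ℕ, ∃ M : ModuleCat.{u} R, ¬ FlatDimLE R n M

/-- The content ideal of a polynomial: the ideal generated by its coefficients. -/
def contentIdeal {R : Type*} [CommRing R] (f : Polynomial R) : Ideal R :=
  Ideal.span (Set.range f.coeff)

/-- A Gaussian ring: `c(fg) = c(f)c(g)` for all polynomials. -/
def IsGaussian (R : Type*) [CommRing R] : Prop :=
  ∀ f g : Polynomial R, contentIdeal (f * g) = contentIdeal f * contentIdeal g

/-- A Prüfer ring: every finitely generated regular ideal is invertible. -/
def IsPruferRing (R : Type u) [CommRing R] : Prop :=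
  ∀ I : Ideal R, I.FG → (∃ x ∈ I, x ∈ nonZeroDivisors R) →
    IsUnit (I : FractionalIdeal (nonZeroDivisors R) (FractionRing R))

/-- A quasi-projective module: every map to a quotient of `M` lifts to an endomorphism. -/
def IsQuasiProjective (R : Type u) [CommRing R] (M : Type v) [AddCommGroup M] [Module R M] : Prop :=
  ∀ (N : Submodule R M) (g : M →ₗ[R] M ⧸ N), ∃ h : M →ₗ[R] M, N.mkQ.comp h = g


section GaussianProof

open Polynomial

variable {R : Type*} [CommRing R]


lemma contentIdeal_eq_span (p : Polynomial R) (s : Set R)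
    (h1 : ∀ k, p.coeff k ∈ Ideal.span s)
    (h2 : ∀ x ∈ s, x ∈ _root_.contentIdeal p) :
    _root_.contentIdeal p = Ideal.span s := by
  refine le_antisymm (Ideal.span_le.2 ?_) (Ideal.span_le.2 h2)
  rintro x ⟨k, rfl⟩
  exact h1 k

lemma content_linear (u v : R) : _root_.contentIdeal (C u * X + C v) = Ideal.span {u, v} := by
  apply contentIdeal_eq_span
  · intro k
    match k with
    | 0 =>
      have : (C u * X + C v).coeff 0 = v := by simp
      rw [this]; exact Ideal.subset_span (by simp)
    | 1 =>
      have : (C u * X + C v).coeff 1 = u := by simp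
      rw [this]; exact Ideal.subset_span (by simp)
    | (k+2) =>
      have : (C u * X + C v).coeff (k+2) = 0 := by
        simp [coeff_X, coeff_C]
      rw [this]; exact zero_mem _
  · rintro x (rfl | rfl)
    · exact Ideal.subset_span ⟨1, by simp⟩
    · exact Ideal.subset_span ⟨0, by simp⟩

lemma mul_linear (u v w z : R) :
    (C u * X + C v) * (C w * X + C z)
      = C (u*w) * X^2 + C (u*z + v*w) * X + C (v*z) := by
  simp only [C_mul, C_add]; ring

lemma content_quad (u v w : R) :
    _root_.contentIdeal (C u * X^2 + C v * X + C w) = Ideal.span {u, v, w} := by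
  apply contentIdeal_eq_span
  · intro k
    match k with
    | 0 =>
      have : (C u * X^2 + C v * X + C w).coeff 0 = w := by simp
      rw [this]; exact Ideal.subset_span (by simp)
    | 1 =>
      have : (C u * X^2 + C v * X + C w).coeff 1 = v := by simp [coeff_X_pow]
      rw [this]; exact Ideal.subset_span (by simp)
    | 2 =>
      have : (C u * X^2 + C v * X + C w).coeff 2 = u := by simp [coeff_X_pow, coeff_C]
      rw [this]; exact Ideal.subset_span (by simp)
    | (k+3) =>
      have : (C u * X^2 + C v * X + C w).coeff (k+3) = 0 := by
        simp [coeff_X_pow, coeff_X, coeff_C]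
      rw [this]; exact zero_mem _
  · rintro x (rfl | rfl | rfl)
    · exact Ideal.subset_span ⟨2, by simp [coeff_X_pow, coeff_C]⟩
    · exact Ideal.subset_span ⟨1, by simp [coeff_X_pow]⟩
    · exact Ideal.subset_span ⟨0, by simp⟩

lemma pair_sq [IsLocalRing R] (hG : IsGaussian R) (a b : R) :
    Ideal.span {a, b} ^ 2 = Ideal.span {a ^ 2} ∨
      Ideal.span {a, b} ^ 2 = Ideal.span {b ^ 2} := by
  -- Step A : I² = (a², b²), hence a*b = r a² + s b²
  have hIfg : Ideal.span ({a, b} : Set R) ^ 2 = Ideal.span {a^2, b^2} := by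
    have h := hG (C a * X + C b) (C a * X + C (-b))
    rw [mul_linear, content_linear, content_linear] at h
    have hset : Ideal.span ({a, -b} : Set R) = Ideal.span {a, b} := by
      apply le_antisymm <;> refine Ideal.span_le.2 (Set.insert_subset_iff.2
        ⟨?_, Set.singleton_subset_iff.2 ?_⟩)
      · exact Ideal.subset_span (by simp)
      · exact neg_mem (Ideal.subset_span (by simp))
      · exact Ideal.subset_span (by simp)
      · exact Ideal.mem_span_pair.2 ⟨0, -1, by ring⟩
    rw [hset] at h
    have hcq : _root_.contentIdeal (C (a * a) * X ^ 2 + C (a * -b + b * a) * X + C (b * -b))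
        = Ideal.span {a^2, b^2} := by
      rw [content_quad]
      apply le_antisymm
      · refine Ideal.span_le.2 (Set.insert_subset_iff.2 ⟨?_, Set.insert_subset_iff.2
          ⟨?_, Set.singleton_subset_iff.2 ?_⟩⟩)
        · exact Ideal.mem_span_pair.2 ⟨1, 0, by ring⟩
        · exact Ideal.mem_span_pair.2 ⟨0, 0, by ring⟩
        · exact Ideal.mem_span_pair.2 ⟨0, -1, by ring⟩
      · refine Ideal.span_le.2 (Set.insert_subset_iff.2
          ⟨?_, Set.singleton_subset_iff.2 ?_⟩)
        · exact Ideal.mem_span_insert.2 ⟨1, 0, zero_mem _, by ring⟩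
        · refine Ideal.mem_span_insert.2 ⟨0, -(b * -b), ?_, by ring⟩
          exact neg_mem (Ideal.subset_span (by simp))
    rw [hcq] at h
    rw [sq, h]
  have hab : a * b ∈ Ideal.span ({a^2, b^2} : Set R) := by
    rw [← hIfg, sq]
    exact Ideal.mul_mem_mul (Ideal.subset_span (by simp)) (Ideal.subset_span (by simp))
  obtain ⟨r, s, hrs⟩ := Ideal.mem_span_pair.1 hab
  -- Step B : find lam mu with lam*mu - (lam*r + mu*s)² a unit
  obtain ⟨lam, mu, hD⟩ : ∃ lam mu : R, IsUnit (lam*mu - (lam*r + mu*s)^2) := by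
    by_cases hr : IsUnit r
    · exact ⟨1, 0, by simpa using (hr.pow 2).neg⟩
    by_cases hs : IsUnit s
    · exact ⟨0, 1, by simpa using (hs.pow 2).neg⟩
    · refine ⟨1, 1, ?_⟩
      have hsum : (1*r + 1*s) ∈ IsLocalRing.maximalIdeal R := by
        simpa using add_mem ((IsLocalRing.mem_maximalIdeal r).2 hr)
          ((IsLocalRing.mem_maximalIdeal s).2 hs)
      have hsq : (1*r + 1*s)^2 ∈ IsLocalRing.maximalIdeal R := by
        rw [sq]; exact Ideal.mul_mem_left _ _ hsum
      rcases IsLocalRing.isUnit_or_isUnit_one_sub_self ((1*r + 1*s)^2) with h | h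
      · exact absurd (Ideal.eq_top_of_isUnit_mem _ hsq h)
          (IsLocalRing.maximalIdeal.isMaximal R).ne_top
      · simpa using h
  set nu := lam*r + mu*s with hnu
  set c := mu*a^2 - lam*b^2 with hc
  obtain ⟨d, hd⟩ := hD.exists_right_inv
  -- Step C : I² = (c)
  have hIc : Ideal.span ({a, b} : Set R) ^ 2 = Ideal.span {c} := by
    have h := hG (C a * X + C b) (C (nu*a - lam*b) * X + C (mu*a - nu*b))
    rw [mul_linear, content_linear, content_linear] at h
    have hg : Ideal.span ({nu*a - lam*b, mu*a - nu*b} : Set R) = Ideal.span {a, b} := by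
      apply le_antisymm <;> refine Ideal.span_le.2 (Set.insert_subset_iff.2
        ⟨?_, Set.singleton_subset_iff.2 ?_⟩)
      · exact Ideal.mem_span_pair.2 ⟨nu, -lam, by ring⟩
      · exact Ideal.mem_span_pair.2 ⟨mu, -nu, by ring⟩
      · exact Ideal.mem_span_pair.2 ⟨-(d*nu), d*lam, by linear_combination a * hd⟩
      · exact Ideal.mem_span_pair.2 ⟨-(d*mu), d*nu, by linear_combination b * hd⟩
    rw [hg] at h
    have hcq : _root_.contentIdeal (C (a * (nu*a - lam*b)) * X ^ 2
        + C (a * (mu*a - nu*b) + b * (nu*a - lam*b)) * X + C (b * (mu*a - nu*b)))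
        = Ideal.span {c} := by
      rw [content_quad]
      apply le_antisymm
      · refine Ideal.span_le.2 (Set.insert_subset_iff.2 ⟨?_, Set.insert_subset_iff.2
          ⟨?_, Set.singleton_subset_iff.2 ?_⟩⟩)
        · exact Ideal.mem_span_singleton.2
            ⟨s, by linear_combination a^2 * hnu - s * hc + lam * hrs⟩
        · exact Ideal.mem_span_singleton.2 ⟨1, by linear_combination -hc⟩
        · exact Ideal.mem_span_singleton.2
            ⟨r, by linear_combination (-mu) * hrs - b^2 * hnu - r * hc⟩
      · refine Ideal.span_le.2 (Set.singleton_subset_iff.2 ?_)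
        refine Ideal.mem_span_insert.2 ⟨0, a * (mu*a - nu*b) + b * (nu*a - lam*b), ?_,
          by linear_combination hc⟩
        exact Ideal.subset_span (by simp)
    rw [hcq] at h
    rw [sq, h]
  -- Step D : a² = c p, b² = c q, and c (1 - (mu p - lam q)) = 0
  have haI : a ∈ Ideal.span ({a, b} : Set R) := Ideal.subset_span (by simp)
  have hbI : b ∈ Ideal.span ({a, b} : Set R) := Ideal.subset_span (by simp)
  have haa : a * a ∈ Ideal.span ({c} : Set R) := by
    rw [← hIc, sq]; exact Ideal.mul_mem_mul haI haI
  have hbb : b * b ∈ Ideal.span ({c} : Set R) := by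
    rw [← hIc, sq]; exact Ideal.mul_mem_mul hbI hbI
  obtain ⟨p, hp⟩ := Ideal.mem_span_singleton.1 haa
  obtain ⟨q, hq⟩ := Ideal.mem_span_singleton.1 hbb
  have key : c * (1 - (mu*p - lam*q)) = 0 := by
    linear_combination mu * hp - lam * hq + hc
  rcases IsLocalRing.isUnit_or_isUnit_one_sub_self (mu*p - lam*q) with hw | hw
  · have : IsUnit (mu*p) ∨ IsUnit (lam*q) := by
      by_contra hcon
      push_neg at hcon
      have h1 : mu*p ∈ IsLocalRing.maximalIdeal R :=
        (IsLocalRing.mem_maximalIdeal _).2 hcon.1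
      have h2 : lam*q ∈ IsLocalRing.maximalIdeal R :=
        (IsLocalRing.mem_maximalIdeal _).2 hcon.2
      exact (IsLocalRing.mem_maximalIdeal _).1 (sub_mem h1 h2) hw
    rcases this with hu | hu
    · left
      have hpu : IsUnit p := isUnit_of_mul_isUnit_right hu
      obtain ⟨p', hp'⟩ := hpu.exists_right_inv
      rw [hIc]
      apply le_antisymm <;> refine Ideal.span_le.2 (Set.singleton_subset_iff.2 ?_)
      · exact Ideal.mem_span_singleton.2 ⟨p', by linear_combination (-p') * hp + (-c) * hp'⟩
      · exact Ideal.mem_span_singleton.2 ⟨p, by linear_combination hp⟩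
    · right
      have hqu : IsUnit q := isUnit_of_mul_isUnit_right hu
      obtain ⟨q', hq'⟩ := hqu.exists_right_inv
      rw [hIc]
      apply le_antisymm <;> refine Ideal.span_le.2 (Set.singleton_subset_iff.2 ?_)
      · exact Ideal.mem_span_singleton.2 ⟨q', by linear_combination (-q') * hq + (-c) * hq'⟩
      · exact Ideal.mem_span_singleton.2 ⟨q, by linear_combination hq⟩
  · have hc0 : c = 0 := by
      rw [mul_comm] at key
      exact (hw.mul_right_eq_zero).1 key
    left
    have ha0 : a^2 = 0 := by linear_combination hp + p * hc0
    rw [hIc, hc0, ha0]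

lemma sq_mem_pair_sq (x y : R) : x * y ∈ Ideal.span ({x, y} : Set R) ^ 2 := by
  rw [sq]
  exact Ideal.mul_mem_mul (Ideal.subset_span (by simp)) (Ideal.subset_span (by simp))

lemma main_aux [IsLocalRing R] (hG : IsGaussian R) :
    ∀ (n : ℕ) (a : Fin (n+1) → R),
      ∃ i, (Ideal.span (Set.range a)) ^ 2 = Ideal.span {a i ^ 2} := by
  intro n
  induction n with
  | zero =>
    intro a
    refine ⟨0, ?_⟩
    have : Set.range a = {a 0} := by
      ext x
      constructor
      · rintro ⟨y, rfl⟩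
        simp [Fin.fin_one_eq_zero y]
      · rintro rfl
        exact ⟨0, rfl⟩
    rw [this, Ideal.span_singleton_pow]
  | succ n ih =>
    intro a
    obtain ⟨i, hi⟩ := ih (Fin.tail a)
    set c := Fin.tail a i with hcdef
    have hrange : Set.range a = insert (a 0) (Set.range (Fin.tail a)) := by
      conv_lhs => rw [← Fin.cons_self_tail a]
      rw [Fin.range_cons]
    -- key pairwise fact
    have key : ∀ (t : R), Ideal.span ({a 0, c} : Set R) ^ 2 = Ideal.span {t ^ 2} →
        (∀ u v : R, u ∈ Set.range a → v ∈ Set.range a → u * v ∈ Ideal.span ({t ^ 2} : Set R)) := by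
      intro t ht u v hu hv
      -- memberships we will use
      have hcmem : c ∈ Ideal.span ({a 0, c} : Set R) :=
        Ideal.subset_span (Set.mem_insert_iff.2 (Or.inr rfl))
      have ha0mem : a 0 ∈ Ideal.span ({a 0, c} : Set R) :=
        Ideal.subset_span (Set.mem_insert _ _)
      have hc2 : c ^ 2 ∈ Ideal.span ({t^2} : Set R) := by
        rw [← ht, sq, pow_two]
        exact Ideal.mul_mem_mul hcmem hcmem
      have ha02 : (a 0) ^ 2 ∈ Ideal.span ({t^2} : Set R) := by
        rw [← ht, sq, pow_two]
        exact Ideal.mul_mem_mul ha0mem ha0mem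
      have htail_sq : ∀ x ∈ Set.range (Fin.tail a), x ^ 2 ∈ Ideal.span ({t^2} : Set R) := by
        intro x hx
        have hx2 : x ^ 2 ∈ Ideal.span (Set.range (Fin.tail a)) ^ 2 := by
          rw [sq, pow_two]
          exact Ideal.mul_mem_mul (Ideal.subset_span hx) (Ideal.subset_span hx)
        rw [hi] at hx2
        obtain ⟨w, hw⟩ := Ideal.mem_span_singleton.1 hx2
        have : c ^ 2 * w ∈ Ideal.span ({t^2} : Set R) := Ideal.mul_mem_right _ _ hc2
        rwa [← hw] at this
      -- handle a general product where one factor is a 0 and the other is in the tail range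
      have hmix : ∀ x ∈ Set.range (Fin.tail a), a 0 * x ∈ Ideal.span ({t^2} : Set R) := by
        intro x hx
        rcases pair_sq hG (a 0) x with hcase | hcase
        · have hm : a 0 * x ∈ Ideal.span ({(a 0)^2} : Set R) := by
            rw [← hcase]; exact sq_mem_pair_sq _ _
          obtain ⟨w, hw⟩ := Ideal.mem_span_singleton.1 hm
          have : (a 0)^2 * w ∈ Ideal.span ({t^2} : Set R) := Ideal.mul_mem_right _ _ ha02
          rwa [← hw] at this
        · have hm : a 0 * x ∈ Ideal.span ({x^2} : Set R) := by
            rw [← hcase]; exact sq_mem_pair_sq _ _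
          obtain ⟨w, hw⟩ := Ideal.mem_span_singleton.1 hm
          have : x^2 * w ∈ Ideal.span ({t^2} : Set R) :=
            Ideal.mul_mem_right _ _ (htail_sq x hx)
          rwa [← hw] at this
      rw [hrange] at hu hv
      simp only [Set.mem_insert_iff] at hu hv
      rcases hu with rfl | hu
      · rcases hv with rfl | hv
        · rw [← pow_two]
          exact ha02
        · exact hmix v hv
      · rcases hv with rfl | hv
        · rw [mul_comm]
          exact hmix u hu
        · have huv : u * v ∈ Ideal.span (Set.range (Fin.tail a)) ^ 2 := by
            rw [sq]
            exact Ideal.mul_mem_mul (Ideal.subset_span hu) (Ideal.subset_span hv)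
          rw [hi] at huv
          obtain ⟨w, hw⟩ := Ideal.mem_span_singleton.1 huv
          have : c ^ 2 * w ∈ Ideal.span ({t^2} : Set R) := Ideal.mul_mem_right _ _ hc2
          rwa [← hw] at this
    -- assemble
    have main : ∀ (t : R), t ∈ Set.range a →
        Ideal.span ({a 0, c} : Set R) ^ 2 = Ideal.span {t ^ 2} →
        (Ideal.span (Set.range a)) ^ 2 = Ideal.span {t ^ 2} := by
      intro t htmem ht
      apply le_antisymm
      · rw [sq, Ideal.span_mul_span']
        refine Ideal.span_le.2 ?_
        rintro z ⟨u, hu, v, hv, rfl⟩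
        exact key t ht u v hu hv
      · refine Ideal.span_le.2 (Set.singleton_subset_iff.2 ?_)
        rw [sq, pow_two]
        exact Ideal.mul_mem_mul (Ideal.subset_span htmem) (Ideal.subset_span htmem)
    rcases pair_sq hG (a 0) c with hcase | hcase
    · exact ⟨0, main (a 0) ⟨0, rfl⟩ hcase⟩
    · exact ⟨i.succ, main (a i.succ) ⟨i.succ, rfl⟩ hcase⟩

end GaussianProof

/-- In a local Gaussian ring, `(a₁, …, aₙ)² = (aᵢ²)` for some `i`. -/
theorem stmt_6 (R : Type u) [CommRing R] [IsLocalRing R] (hG : IsGaussian R)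
    (n : ℕ) (hn : 0 < n) (a : Fin n → R) :
    ∃ i : Fin n, (Ideal.span (Set.range a)) ^ 2 = Ideal.span {a i ^ 2} := by
  match n, hn, a with
  | (m+1), _, a => exact main_aux hG m a
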